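/- Let L be a finite dimensional complex simple Lie algebra. A linear map φ : L → L satisfies [φ(x), x] = 0 for all x ∈ L if and only if φ = λ·id for some λ ∈ ℂ. -/

import Mathlib

theorem stmt_16 {L : Type*} [LieRing L] [LieAlgebra ℂ L]
    [FiniteDimensional ℂ L] [LieAlgebra.IsSimple ℂ L]
    (φ : L →ₗ[ℂ] L) :
    (∀ x : L, ⁅φ x, x⁆ = 0) ↔ ∃ lam : ℂ, ∀ x : L, φ x = lam • x := by
  constructor
  · intro h
    -- skew-symmetry helper
    have sk : ∀ A B : L, ⁅A, B⁆ = -⁅B, A⁆ := by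
      intro A B; rw [← lie_skew A B]
    -- polarization: φ is "symmetric" with respect to the bracket
    have star : ∀ x y : L, ⁅φ x, y⁆ = ⁅x, φ y⁆ := by
      intro x y
      have hxy := h (x + y)
      rw [map_add, add_lie, lie_add, lie_add, h x, h y, zero_add, add_zero] at hxy
      rw [← lie_skew x (φ y)]
      exact eq_neg_of_add_eq_zero_left hxy
    -- first-slot derivation property of B x y = ⁅φ x, y⁆
    have d1 : ∀ a b t : L, ⁅φ ⁅a, b⁆, t⁆ = ⁅⁅φ a, t⁆, b⁆ + ⁅a, ⁅φ b, t⁆⁆ := by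
      intro a b t
      rw [star ⁅a, b⁆ t, lie_lie, ← star a t, ← star b t, sk ⁅φ a, t⁆ b]
      abel
    -- expand ⁅φ ⁅x,u⁆, ⁅y,v⁆⁆ in two ways
    have E0 : ∀ x y u v : L,
        ⁅⁅⁅φ x, y⁆, u⁆, v⁆ + ⁅⁅x, ⁅φ u, y⁆⁆, v⁆ + ⁅y, ⁅⁅φ x, v⁆, u⁆⁆ + ⁅y, ⁅x, ⁅φ u, v⁆⁆⁆
          = ⁅⁅⁅φ x, y⁆, v⁆, u⁆ + ⁅⁅y, ⁅φ x, v⁆⁆, u⁆ + ⁅x, ⁅⁅φ u, y⁆, v⁆⁆ + ⁅x, ⁅y, ⁅φ u, v⁆⁆⁆ := by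
      intro x y u v
      have h1 : ⁅φ ⁅x, u⁆, ⁅y, v⁆⁆
          = ⁅⁅⁅φ x, y⁆, u⁆, v⁆ + ⁅⁅x, ⁅φ u, y⁆⁆, v⁆ + ⁅y, ⁅⁅φ x, v⁆, u⁆⁆ + ⁅y, ⁅x, ⁅φ u, v⁆⁆⁆ := by
        rw [leibniz_lie (φ ⁅x, u⁆) y v, d1 x u y, d1 x u v, add_lie, lie_add]
        abel
      have h2 : ⁅φ ⁅x, u⁆, ⁅y, v⁆⁆
          = ⁅⁅⁅φ x, y⁆, v⁆, u⁆ + ⁅⁅y, ⁅φ x, v⁆⁆, u⁆ + ⁅x, ⁅⁅φ u, y⁆, v⁆⁆ + ⁅x, ⁅y, ⁅φ u, v⁆⁆⁆ := by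
        rw [d1 x u ⁅y, v⁆, leibniz_lie (φ x) y v, leibniz_lie (φ u) y v, add_lie, lie_add]
        abel
      exact h1.symm.trans h2
    -- the fundamental 4-variable identity
    have I0 : ∀ x y u v : L,
        ⁅⁅φ x, y⁆, ⁅u, v⁆⁆ - ⁅⁅x, y⁆, ⁅φ u, v⁆⁆ - ⁅⁅φ u, y⁆, ⁅x, v⁆⁆ + ⁅⁅u, y⁆, ⁅φ x, v⁆⁆ = 0 := by
      intro x y u v
      have e0 : (⁅⁅⁅φ x, y⁆, u⁆, v⁆ + ⁅⁅x, ⁅φ u, y⁆⁆, v⁆ + ⁅y, ⁅⁅φ x, v⁆, u⁆⁆ + ⁅y, ⁅x, ⁅φ u, v⁆⁆⁆)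
          - (⁅⁅⁅φ x, y⁆, v⁆, u⁆ + ⁅⁅y, ⁅φ x, v⁆⁆, u⁆ + ⁅x, ⁅⁅φ u, y⁆, v⁆⁆ + ⁅x, ⁅y, ⁅φ u, v⁆⁆⁆) = 0 :=
        sub_eq_zero_of_eq (E0 x y u v)
      have hA : ⁅⁅φ x, y⁆, ⁅u, v⁆⁆ = ⁅⁅⁅φ x, y⁆, u⁆, v⁆ - ⁅⁅⁅φ x, y⁆, v⁆, u⁆ := by
        rw [leibniz_lie ⁅φ x, y⁆ u v, sk u ⁅⁅φ x, y⁆, v⁆]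
        abel
      have hB : ⁅⁅x, y⁆, ⁅φ u, v⁆⁆ = ⁅x, ⁅y, ⁅φ u, v⁆⁆⁆ - ⁅y, ⁅x, ⁅φ u, v⁆⁆⁆ := lie_lie x y ⁅φ u, v⁆
      have hC : ⁅⁅φ u, y⁆, ⁅x, v⁆⁆ = ⁅x, ⁅⁅φ u, y⁆, v⁆⁆ - ⁅⁅x, ⁅φ u, y⁆⁆, v⁆ := by
        rw [leibniz_lie ⁅φ u, y⁆ x v, sk ⁅φ u, y⁆ x, neg_lie]
        abel
      have hD : ⁅⁅u, y⁆, ⁅φ x, v⁆⁆ = ⁅y, ⁅⁅φ x, v⁆, u⁆⁆ - ⁅⁅y, ⁅φ x, v⁆⁆, u⁆ := by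
        rw [lie_lie u y ⁅φ x, v⁆, sk u ⁅y, ⁅φ x, v⁆⁆, sk u ⁅φ x, v⁆, lie_neg]
        abel
      rw [hA, hB, hC, hD]
      convert e0 using 1
      abel
    -- symmetry in the first and third arguments
    have hsym : ∀ x y u v : L,
        ⁅⁅φ x, y⁆, ⁅u, v⁆⁆ - ⁅⁅x, y⁆, ⁅φ u, v⁆⁆ = ⁅⁅φ u, y⁆, ⁅x, v⁆⁆ - ⁅⁅u, y⁆, ⁅φ x, v⁆⁆ := by
      intro x y u v
      rw [← sub_eq_zero]
      convert I0 x y u v using 1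
      abel
    -- antisymmetry in the first pair
    have hskew : ∀ x y u v : L,
        ⁅⁅φ x, y⁆, ⁅u, v⁆⁆ - ⁅⁅x, y⁆, ⁅φ u, v⁆⁆
          = -(⁅⁅φ y, x⁆, ⁅u, v⁆⁆ - ⁅⁅y, x⁆, ⁅φ u, v⁆⁆) := by
      intro x y u v
      have h1 : ⁅φ y, x⁆ = -⁅φ x, y⁆ := by rw [star y x, sk y (φ x), star x y]
      have h2 : ⁅y, x⁆ = -⁅x, y⁆ := sk y x
      rw [h1, h2, neg_lie, neg_lie]
      abel
    -- the key bracket identity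
    have hL : ∀ x y u v : L, ⁅⁅φ x, y⁆, ⁅u, v⁆⁆ = ⁅⁅x, y⁆, ⁅φ u, v⁆⁆ := by
      intro x y u v
      have hh : ⁅⁅φ x, y⁆, ⁅u, v⁆⁆ - ⁅⁅x, y⁆, ⁅φ u, v⁆⁆
          = -(⁅⁅φ x, y⁆, ⁅u, v⁆⁆ - ⁅⁅x, y⁆, ⁅φ u, v⁆⁆) := by
        calc ⁅⁅φ x, y⁆, ⁅u, v⁆⁆ - ⁅⁅x, y⁆, ⁅φ u, v⁆⁆
            = ⁅⁅φ u, y⁆, ⁅x, v⁆⁆ - ⁅⁅u, y⁆, ⁅φ x, v⁆⁆ := hsym x y u v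
          _ = -(⁅⁅φ y, u⁆, ⁅x, v⁆⁆ - ⁅⁅y, u⁆, ⁅φ x, v⁆⁆) := hskew u y x v
          _ = -(⁅⁅φ x, u⁆, ⁅y, v⁆⁆ - ⁅⁅x, u⁆, ⁅φ y, v⁆⁆) := by rw [hsym y u x v]
          _ = ⁅⁅φ u, x⁆, ⁅y, v⁆⁆ - ⁅⁅u, x⁆, ⁅φ y, v⁆⁆ := by rw [hskew x u y v, neg_neg]
          _ = ⁅⁅φ y, x⁆, ⁅u, v⁆⁆ - ⁅⁅y, x⁆, ⁅φ u, v⁆⁆ := hsym u x y v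
          _ = -(⁅⁅φ x, y⁆, ⁅u, v⁆⁆ - ⁅⁅x, y⁆, ⁅φ u, v⁆⁆) := by rw [hskew x y u v, neg_neg]
      have h2 : (2 : ℂ) • (⁅⁅φ x, y⁆, ⁅u, v⁆⁆ - ⁅⁅x, y⁆, ⁅φ u, v⁆⁆) = 0 := by
        rw [two_smul]
        nth_rewrite 1 [hh]
        exact neg_add_cancel _
      have h3 := (smul_eq_zero.mp h2).resolve_left two_ne_zero
      exact sub_eq_zero.mp h3
    -- centralizer of all brackets is trivial
    have hcent : ∀ s : L, (∀ u v : L, ⁅s, ⁅u, v⁆⁆ = 0) → s = 0 := by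
      intro s hs
      set I : LieIdeal ℂ L :=
        { toSubmodule := Submodule.span ℂ {z : L | ∃ u v : L, ⁅u, v⁆ = z}
          lie_mem := fun {x m} _ => Submodule.subset_span ⟨x, m, rfl⟩ } with hIdef
      have hItop : I = ⊤ := by
        rcases LieAlgebra.IsSimple.eq_bot_or_eq_top I with hbot | htop
        · exfalso
          apply LieAlgebra.IsSimple.non_abelian ℂ (L := L)
          constructor
          intro a b
          have hab : ⁅a, b⁆ ∈ I := Submodule.subset_span ⟨a, b, rfl⟩
          rw [hbot] at hab
          exact (LieSubmodule.mem_bot _).mp hab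
        · exact htop
      have hsx : ∀ t : L, ⁅s, t⁆ = 0 := by
        intro t
        have ht : t ∈ I := by rw [hItop]; exact LieSubmodule.mem_top t
        have ht' : t ∈ Submodule.span ℂ {z : L | ∃ u v : L, ⁅u, v⁆ = z} := ht
        refine Submodule.span_induction (p := fun z _ => ⁅s, z⁆ = 0) ?_ ?_ ?_ ?_ ht'
        · rintro z ⟨u, v, rfl⟩; exact hs u v
        · exact lie_zero s
        · intro a b _ _ ha hb; rw [lie_add, ha, hb, add_zero]
        · intro c a _ ha; rw [lie_smul, ha, smul_zero]
      have hc : s ∈ LieAlgebra.center ℂ L := by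
        rw [LieModule.mem_maxTrivSubmodule]
        intro x
        rw [sk x s, hsx x, neg_zero]
      rw [LieAlgebra.center_eq_bot ℂ L] at hc
      exact (LieSubmodule.mem_bot _).mp hc
    -- the auxiliary element vanishes
    have hs0 : ∀ x y w : L, ⁅φ ⁅x, y⁆, w⁆ - ⁅φ x, ⁅y, w⁆⁆ + ⁅φ y, ⁅x, w⁆⁆ = 0 := by
      intro x y w
      apply hcent
      intro u v
      have inner0 : ⁅⁅x, y⁆, w⁆ - ⁅x, ⁅y, w⁆⁆ + ⁅y, ⁅x, w⁆⁆ = 0 := by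
        rw [lie_lie x y w]; abel
      calc ⁅⁅φ ⁅x, y⁆, w⁆ - ⁅φ x, ⁅y, w⁆⁆ + ⁅φ y, ⁅x, w⁆⁆, ⁅u, v⁆⁆
          = ⁅⁅φ ⁅x, y⁆, w⁆, ⁅u, v⁆⁆ - ⁅⁅φ x, ⁅y, w⁆⁆, ⁅u, v⁆⁆ + ⁅⁅φ y, ⁅x, w⁆⁆, ⁅u, v⁆⁆ := by
            rw [add_lie, sub_lie]
        _ = ⁅⁅⁅x, y⁆, w⁆, ⁅φ u, v⁆⁆ - ⁅⁅x, ⁅y, w⁆⁆, ⁅φ u, v⁆⁆ + ⁅⁅y, ⁅x, w⁆⁆, ⁅φ u, v⁆⁆ := by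
            rw [hL ⁅x, y⁆ w u v, hL x ⁅y, w⁆ u v, hL y ⁅x, w⁆ u v]
        _ = ⁅⁅⁅x, y⁆, w⁆ - ⁅x, ⁅y, w⁆⁆ + ⁅y, ⁅x, w⁆⁆, ⁅φ u, v⁆⁆ := by
            rw [add_lie, sub_lie]
        _ = 0 := by rw [inner0, zero_lie]
    -- φ commutes with the adjoint action (via brackets)
    have key : ∀ x y : L, φ ⁅x, y⁆ = ⁅φ x, y⁆ := by
      intro x y
      have hyx : ⁅φ y, x⁆ = -⁅φ x, y⁆ := by rw [star y x, sk y (φ x), star x y]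
      have h2w : ∀ w : L, (2 : ℂ) • ⁅φ ⁅x, y⁆ - ⁅φ x, y⁆, w⁆ = 0 := by
        intro w
        have hxyw : ⁅x, ⁅y, φ w⁆⁆ = ⁅φ ⁅x, y⁆, w⁆ + ⁅y, ⁅x, φ w⁆⁆ := by
          rw [star ⁅x, y⁆ w, lie_lie]; abel
        have h0 := hs0 x y w
        rw [leibniz_lie (φ x) y w, leibniz_lie (φ y) x w, hyx, star x w, star y w, hxyw,
          neg_lie] at h0
        rw [sub_lie, two_smul]
        convert h0 using 1
        abel
      have hdw : ∀ w : L, ⁅φ ⁅x, y⁆ - ⁅φ x, y⁆, w⁆ = 0 := fun w =>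
        (smul_eq_zero.mp (h2w w)).resolve_left two_ne_zero
      have := hcent _ (fun u v => hdw ⁅u, v⁆)
      exact sub_eq_zero.mp this
    -- final step: an eigenspace of φ is a Lie ideal, hence everything
    have : Nontrivial L := by
      rcases subsingleton_or_nontrivial L with hs | hn
      · exact absurd ⟨fun a b => Subsingleton.elim _ _⟩ (LieAlgebra.IsSimple.non_abelian ℂ (L := L))
      · exact hn
    obtain ⟨μ, hμ⟩ := Module.End.exists_eigenvalue (φ : Module.End ℂ L)
    obtain ⟨v, hv⟩ := hμ.exists_hasEigenvector
    set J : LieIdeal ℂ L :=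
      { toSubmodule := Module.End.eigenspace (φ : Module.End ℂ L) μ
        lie_mem := by
          intro x m hm
          have hm' : φ m = μ • m :=
            Module.End.mem_eigenspace_iff.mp hm
          show ⁅x, m⁆ ∈ Module.End.eigenspace (φ : Module.End ℂ L) μ
          rw [Module.End.mem_eigenspace_iff]
          show φ ⁅x, m⁆ = μ • ⁅x, m⁆
          rw [key x m, star x m, hm', lie_smul] } with hJdef
    rcases LieAlgebra.IsSimple.eq_bot_or_eq_top J with hbot | htop
    · exfalso
      have hvJ : v ∈ J := hv.1
      rw [hbot] at hvJ
      exact hv.2 ((LieSubmodule.mem_bot _).mp hvJ)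
    · refine ⟨μ, fun x => ?_⟩
      have hx : x ∈ J := by rw [htop]; exact LieSubmodule.mem_top x
      exact Module.End.mem_eigenspace_iff.mp hx
  · rintro ⟨lam, hl⟩ x
    rw [hl x, smul_lie, lie_self, smul_zero]
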